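/- Let F and G be faces of P, let v_F be a lattice point in the relative interior (intrinsicInterior) of F and v_G a lattice point in the relative interior of G. Let H be a face of P such that F ∪ G ⊆ H and H ⊆ H' for every face H' of P with F ∪ G ⊆ H' (i.e. H is the smallest face containing F and G). Then T_H = {t + r • (v_F − v_G) | t ∈ T_G, r ∈ ℝ} and S_H = {s + m • (v_F − v_G) | s ∈ S_G, m ∈ ℤ}. -/

import Mathlib

open Set

/-- A lattice point of `ℝⁿ`: all coordinates are integers. -/
def IsLatticePt {n : ℕ} (x : Fin n → ℝ) : Prop := ∀ i, ∃ m : ℤ, x i = (m : ℝ)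

/-- The tangent cone of `P` at a face `F`: the set of all finite nonnegative real linear
combinations of vectors `p - f` with `p ∈ P` and `f ∈ F`. -/
def tangentCone {n : ℕ} (P F : Set (Fin n → ℝ)) : Set (Fin n → ℝ) :=
  { x | ∃ (k : ℕ) (c : Fin k → ℝ) (p f : Fin k → (Fin n → ℝ)),
      (∀ i, 0 ≤ c i) ∧ (∀ i, p i ∈ P) ∧ (∀ i, f i ∈ F) ∧
      x = ∑ i, c i • (p i - f i) }

/-- The monoid of lattice points of the tangent cone. -/
def latticeTangentCone {n : ℕ} (P F : Set (Fin n → ℝ)) : Set (Fin n → ℝ) :=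
  { x ∈ tangentCone P F | IsLatticePt x }

/-- The dilate `k • P` of a subset `P ⊆ ℝⁿ` by an integer `k`. -/
def dilate {n : ℕ} (k : ℤ) (P : Set (Fin n → ℝ)) : Set (Fin n → ℝ) :=
  (fun p => k • p) '' P

section ConeClosed

variable {E : Type*} [NormedAddCommGroup E] [NormedSpace ℝ E] [FiniteDimensional ℝ E]

/-- The set of nonnegative combinations of elements of a finite set. -/
def coneOf (s : Finset E) : Set E :=
  { x | ∃ c : E → ℝ, (∀ v ∈ s, 0 ≤ c v) ∧ x = ∑ v ∈ s, c v • v }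

omit [FiniteDimensional ℝ E] in
theorem coneOf_mono {s t : Finset E} (h : s ⊆ t) : coneOf s ⊆ coneOf t := by
  classical
  rintro x ⟨c, hc, rfl⟩
  refine ⟨fun v => if v ∈ s then c v else 0, fun v hv => ?_, ?_⟩
  · dsimp only; split_ifs with h'
    · exact hc v h'
    · exact le_refl 0
  · rw [← Finset.sum_subset h (fun v _ hvs => by simp [hvs])]
    exact Finset.sum_congr rfl fun v hv => by simp [hv]

omit [FiniteDimensional ℝ E] in
theorem coneOf_zero (s : Finset E) : (0 : E) ∈ coneOf s :=
  ⟨fun _ => 0, fun _ _ => le_rfl, by simp⟩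

omit [FiniteDimensional ℝ E] in
theorem coneOf_smul {s : Finset E} {a : ℝ} (ha : 0 ≤ a) {x : E} (hx : x ∈ coneOf s) :
    a • x ∈ coneOf s := by
  obtain ⟨c, hc, rfl⟩ := hx
  refine ⟨fun v => a * c v, fun v hv => mul_nonneg ha (hc v hv), ?_⟩
  rw [Finset.smul_sum]
  exact Finset.sum_congr rfl fun v hv => by dsimp only; rw [smul_smul]

omit [FiniteDimensional ℝ E] in
theorem coneOf_single {s : Finset E} {v : E} (hv : v ∈ s) : v ∈ coneOf s := by
  classical
  refine ⟨fun u => if u = v then 1 else 0, fun u hu => by dsimp only; split_ifs <;> norm_num, ?_⟩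
  have : ∀ u ∈ s, (if u = v then (1 : ℝ) else 0) • u = if u = v then u else 0 := by
    intro u hu; split_ifs <;> simp
  rw [Finset.sum_congr rfl this, Finset.sum_ite_eq' s v (fun u => u), if_pos hv]

omit [FiniteDimensional ℝ E] in
theorem coneOf_convex (s : Finset E) : Convex ℝ (coneOf s) := by
  rintro x ⟨cx, hcx, rfl⟩ y ⟨cy, hcy, rfl⟩ a b ha hb hab
  refine ⟨fun u => a * cx u + b * cy u, fun u hu =>
    add_nonneg (mul_nonneg ha (hcx u hu)) (mul_nonneg hb (hcy u hu)), ?_⟩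
  rw [Finset.smul_sum, Finset.smul_sum, ← Finset.sum_add_distrib]
  exact Finset.sum_congr rfl fun u hu => by dsimp only; rw [smul_smul, smul_smul, add_smul]

theorem caratheodory_cone (s : Finset E) :
    ∀ x ∈ coneOf s, ∃ t : Finset E, t ⊆ s ∧
      LinearIndependent ℝ (fun i : {v // v ∈ t} => (i : E)) ∧ x ∈ coneOf t := by
  classical
  induction s using Finset.strongInductionOn with
  | _ s ih =>
    intro x hx
    by_cases hli : LinearIndependent ℝ (fun i : {v // v ∈ s} => (i : E))
    · exact ⟨s, subset_rfl, hli, hx⟩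
    obtain ⟨c, hc0, hcx⟩ := hx
    rw [Fintype.not_linearIndependent_iff] at hli
    obtain ⟨g, hgsum, i0, hgi0⟩ := hli
    set d : E → ℝ := fun v => if h : v ∈ s then g ⟨v, h⟩ else 0 with hd
    have hdsum : ∑ v ∈ s, d v • v = 0 := by
      rw [← hgsum, ← Finset.sum_attach s (fun v => d v • v)]
      rw [Finset.univ_eq_attach]
      exact Finset.sum_congr rfl fun i _ => by simp [hd, i.2]
    have key : ∀ d : E → ℝ, (∑ v ∈ s, d v • v = 0) → (∃ v ∈ s, 0 < d v) →
        ∃ t : Finset E, t ⊆ s ∧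
          LinearIndependent ℝ (fun i : {v // v ∈ t} => (i : E)) ∧ x ∈ coneOf t := by
      intro d hdsum ⟨v1, hv1s, hv1pos⟩
      set T := s.filter (fun v => 0 < d v) with hT
      have hTne : T.Nonempty := ⟨v1, Finset.mem_filter.2 ⟨hv1s, hv1pos⟩⟩
      obtain ⟨v0, hv0T, hv0min⟩ := T.exists_min_image (fun v => c v / d v) hTne
      obtain ⟨hv0s, hv0pos⟩ := Finset.mem_filter.1 hv0T
      set r := c v0 / d v0 with hr
      have hr0 : 0 ≤ r := div_nonneg (hc0 v0 hv0s) hv0pos.le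
      set c' : E → ℝ := fun v => c v - r * d v with hc'
      have hc'0 : ∀ v ∈ s, 0 ≤ c' v := by
        intro v hv
        rcases le_or_gt (d v) 0 with hdv | hdv
        · have : r * d v ≤ 0 := mul_nonpos_of_nonneg_of_nonpos hr0 hdv
          simp only [hc']; linarith [hc0 v hv]
        · have hvT : v ∈ T := Finset.mem_filter.2 ⟨hv, hdv⟩
          have := hv0min v hvT
          have : r * d v ≤ c v := by
            rw [hr]
            calc c v0 / d v0 * d v ≤ c v / d v * d v := by
                  apply mul_le_mul_of_nonneg_right this hdv.le
              _ = c v := div_mul_cancel₀ _ hdv.ne'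
          simp only [hc']; linarith
      have hc'v0 : c' v0 = 0 := by
        simp only [hc', hr]
        field_simp
        ring
      have hxsum : x = ∑ v ∈ s, c' v • v := by
        simp only [hc', sub_smul, mul_smul, Finset.sum_sub_distrib]
        rw [← Finset.smul_sum, hdsum, smul_zero, sub_zero, hcx]
      have hxerase : x ∈ coneOf (s.erase v0) := by
        refine ⟨c', fun v hv => hc'0 v (Finset.mem_of_mem_erase hv), ?_⟩
        rw [hxsum, ← Finset.add_sum_erase s _ hv0s, hc'v0, zero_smul, zero_add]
      obtain ⟨t, hts, hli, hxt⟩ := ih (s.erase v0) (Finset.erase_ssubset hv0s) x hxerase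
      exact ⟨t, hts.trans (Finset.erase_subset _ _), hli, hxt⟩
    rcases lt_or_gt_of_ne hgi0 with hneg | hpos
    · refine key (-d) (by rw [← neg_zero, ← hdsum]; simp [Finset.sum_neg_distrib]) ?_
      exact ⟨i0, i0.2, by simp [hd, i0.2]; linarith⟩
    · exact key d hdsum ⟨i0, i0.2, by simp [hd, i0.2, hpos]⟩

theorem isClosed_coneOf_of_linearIndependent (t : Finset E)
    (hli : LinearIndependent ℝ (fun i : {v // v ∈ t} => (i : E))) :
    IsClosed (coneOf t) := by
  classical
  set φ : ({v // v ∈ t} → ℝ) →ₗ[ℝ] E :=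
    { toFun := fun c => ∑ i, c i • (i : E)
      map_add' := by intros a b; simp [add_smul, Finset.sum_add_distrib]
      map_smul' := by intros a b; simp [smul_smul, Finset.smul_sum] } with hφ
  have hker : LinearMap.ker φ = ⊥ := by
    rw [LinearMap.ker_eq_bot']
    intro c hc
    funext i
    exact Fintype.linearIndependent_iff.1 hli c hc i
  have hemb := LinearMap.isClosedEmbedding_of_injective (f := φ) hker
  have hK : IsClosed {c : {v // v ∈ t} → ℝ | ∀ i, 0 ≤ c i} := by
    have : {c : {v // v ∈ t} → ℝ | ∀ i, 0 ≤ c i} = ⋂ i, {c | 0 ≤ c i} :=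
      by ext c; simp [Set.mem_iInter]
    rw [this]
    exact isClosed_iInter fun i => isClosed_le continuous_const (continuous_apply i)
  have himg : coneOf t = φ '' {c : {v // v ∈ t} → ℝ | ∀ i, 0 ≤ c i} := by
    ext x
    constructor
    · rintro ⟨c, hc, rfl⟩
      refine ⟨fun i => c i, fun i => hc i i.2, ?_⟩
      show ∑ i, c ((i : {v // v ∈ t}) : E) • ((i : {v // v ∈ t}) : E) = _
      rw [Finset.univ_eq_attach, Finset.sum_attach t (fun v => c v • v)]
    · rintro ⟨c, hc, rfl⟩
      refine ⟨fun v => if h : v ∈ t then c ⟨v, h⟩ else 0,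
        fun v hv => by simp only [hv, dif_pos]; exact hc _, ?_⟩
      show _ = ∑ v ∈ t, (if h : v ∈ t then c ⟨v, h⟩ else 0) • v
      rw [← Finset.sum_attach t (fun v => (if h : v ∈ t then c ⟨v, h⟩ else 0) • v)]
      show ∑ i, c i • (i : E) = _
      rw [Finset.univ_eq_attach]
      exact Finset.sum_congr rfl fun i _ => by simp [i.2]
  rw [himg]
  exact hemb.isClosedMap _ hK

theorem isClosed_coneOf (s : Finset E) : IsClosed (coneOf s) := by
  classical
  have hsub : coneOf s =
      ⋃ t ∈ {t : Finset E | t ⊆ s ∧ LinearIndependent ℝ (fun i : {v // v ∈ t} => (i : E))},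
        coneOf t := by
    ext x
    simp only [Set.mem_iUnion, Set.mem_setOf_eq]
    constructor
    · intro hx
      obtain ⟨t, hts, hli, hxt⟩ := caratheodory_cone s x hx
      exact ⟨t, ⟨hts, hli⟩, hxt⟩
    · rintro ⟨t, ⟨hts, -⟩, hxt⟩
      exact coneOf_mono hts hxt
  rw [hsub]
  apply Set.Finite.isClosed_biUnion
  · exact (s.powerset.finite_toSet).subset fun t ht => Finset.mem_coe.2
      (Finset.mem_powerset.2 ht.1)
  · exact fun t ht => isClosed_coneOf_of_linearIndependent t ht.2

end ConeClosed

theorem relint_extend {E : Type*} [NormedAddCommGroup E] [NormedSpace ℝ E] {F : Set E}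
    {v p : E} (hv : v ∈ intrinsicInterior ℝ F) (hp : p ∈ F) :
    ∃ t : ℝ, 0 < t ∧ v + t • (v - p) ∈ F := by
  obtain ⟨y, hy, hyv⟩ := mem_intrinsicInterior.1 hv
  have hvspan : v ∈ affineSpan ℝ F := hyv ▸ y.2
  have hpspan : p ∈ affineSpan ℝ F := subset_affineSpan ℝ F hp
  have hmem : ∀ t : ℝ, v + t • (v - p) ∈ affineSpan ℝ F := fun t => by
    have := AffineSubspace.smul_vsub_vadd_mem (affineSpan ℝ F) t hvspan hpspan hvspan
    simpa [vsub_eq_sub, vadd_eq_add, add_comm] using this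
  set c : ℝ → affineSpan ℝ F := fun t => ⟨v + t • (v - p), hmem t⟩ with hcdef
  have hc : Continuous c := by
    apply Continuous.subtype_mk
    fun_prop
  have hc0 : c 0 = y := Subtype.ext (by simp [hcdef, hyv])
  have hopen : IsOpen (c ⁻¹' interior (((↑) : affineSpan ℝ F → E) ⁻¹' F)) :=
    isOpen_interior.preimage hc
  have h0mem : (0 : ℝ) ∈ c ⁻¹' interior (((↑) : affineSpan ℝ F → E) ⁻¹' F) := by
    rw [Set.mem_preimage, hc0]; exact hy
  obtain ⟨ε, hε, hball⟩ := Metric.isOpen_iff.1 hopen 0 h0mem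
  refine ⟨ε / 2, by positivity, ?_⟩
  have hmem2 : (ε / 2 : ℝ) ∈ Metric.ball (0 : ℝ) ε := by
    simp only [Metric.mem_ball, Real.dist_eq, sub_zero]
    rw [abs_of_pos (by positivity)]
    linarith
  have h3 := interior_subset (hball hmem2)
  exact h3

section TCAux
variable {n : ℕ} {P F F' : Set (Fin n → ℝ)}

theorem tc_zero : (0 : Fin n → ℝ) ∈ tangentCone P F :=
  ⟨0, Fin.elim0, Fin.elim0, Fin.elim0, fun i => i.elim0, fun i => i.elim0, fun i => i.elim0,
    by simp⟩

theorem tc_single {c : ℝ} {p f : Fin n → ℝ} (hc : 0 ≤ c) (hp : p ∈ P) (hf : f ∈ F) :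
    c • (p - f) ∈ tangentCone P F :=
  ⟨1, fun _ => c, fun _ => p, fun _ => f, fun _ => hc, fun _ => hp, fun _ => hf, by
    simp [Fin.sum_univ_one]⟩

theorem tc_sub {p f : Fin n → ℝ} (hp : p ∈ P) (hf : f ∈ F) : p - f ∈ tangentCone P F := by
  simpa using tc_single zero_le_one hp hf (c := 1)

theorem tc_add {x y : Fin n → ℝ} (hx : x ∈ tangentCone P F) (hy : y ∈ tangentCone P F) :
    x + y ∈ tangentCone P F := by
  obtain ⟨k₁, c₁, p₁, f₁, hc₁, hp₁, hf₁, hx⟩ := hx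
  obtain ⟨k₂, c₂, p₂, f₂, hc₂, hp₂, hf₂, hy⟩ := hy
  refine ⟨k₁ + k₂, Fin.append c₁ c₂, Fin.append p₁ p₂, Fin.append f₁ f₂, ?_, ?_, ?_, ?_⟩
  · intro i; induction i using Fin.addCases with
    | left i => simpa using hc₁ i
    | right i => simpa using hc₂ i
  · intro i; induction i using Fin.addCases with
    | left i => simpa using hp₁ i
    | right i => simpa using hp₂ i
  · intro i; induction i using Fin.addCases with
    | left i => simpa using hf₁ i
    | right i => simpa using hf₂ i
  · rw [Fin.sum_univ_add]
    simp only [Fin.append_left, Fin.append_right]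
    rw [hx, hy]

theorem tc_smul {a : ℝ} {x : Fin n → ℝ} (ha : 0 ≤ a) (hx : x ∈ tangentCone P F) :
    a • x ∈ tangentCone P F := by
  obtain ⟨k, c, p, f, hc, hp, hf, hx⟩ := hx
  refine ⟨k, fun i => a * c i, p, f, fun i => mul_nonneg ha (hc i), hp, hf, ?_⟩
  rw [hx, Finset.smul_sum]
  exact Finset.sum_congr rfl fun i _ => by dsimp only; rw [smul_smul]

theorem tc_mono (h : F ⊆ F') : tangentCone P F ⊆ tangentCone P F' := by
  rintro x ⟨k, c, p, f, hc, hp, hf, hx⟩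
  exact ⟨k, c, p, f, hc, hp, fun i => h (hf i), hx⟩

end TCAux

/-- Let `F`, `G` be faces of `P`, with lattice points `v_F`, `v_G` in their
respective relative interiors, and let `H` be the smallest face of `P` containing `F ∪ G`.
Then `T_H = T_G + ℝ (v_F - v_G)` and `S_H = S_G + ℤ (v_F - v_G)`. -/
theorem stmt7 {n : ℕ} (hn : 1 ≤ n) (P : Set (Fin n → ℝ))
    (V : Finset (Fin n → ℝ)) (hV : ∀ v ∈ V, IsLatticePt v)
    (hP : P = convexHull ℝ (V : Set (Fin n → ℝ)))
    (hdim : affineSpan ℝ P = ⊤)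
    (F G : Set (Fin n → ℝ))
    (hFne : F.Nonempty) (hFexp : IsExposed ℝ P F)
    (hGne : G.Nonempty) (hGexp : IsExposed ℝ P G)
    (vF vG : Fin n → ℝ)
    (hvF : IsLatticePt vF) (hvFmem : vF ∈ intrinsicInterior ℝ F)
    (hvG : IsLatticePt vG) (hvGmem : vG ∈ intrinsicInterior ℝ G)
    (H : Set (Fin n → ℝ)) (hHne : H.Nonempty) (hHexp : IsExposed ℝ P H)
    (hFGH : F ∪ G ⊆ H)
    (hHmin : ∀ H' : Set (Fin n → ℝ), H'.Nonempty → IsExposed ℝ P H' →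
      F ∪ G ⊆ H' → H ⊆ H') :
    tangentCone P H = {x | ∃ t ∈ tangentCone P G, ∃ r : ℝ, x = t + r • (vF - vG)} ∧
      latticeTangentCone P H =
        {x | ∃ s ∈ latticeTangentCone P G, ∃ m : ℤ, x = s + (m : ℝ) • (vF - vG)} := by
  classical
  have hPconv : Convex ℝ P := hP ▸ convex_convexHull ℝ _
  have hFP : F ⊆ P := hFexp.subset
  have hGP : G ⊆ P := hGexp.subset
  have hvFF : vF ∈ F := intrinsicInterior_subset hvFmem
  have hvGG : vG ∈ G := intrinsicInterior_subset hvGmem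
  have hFH : F ⊆ H := (Set.union_subset_iff.1 hFGH).1
  have hGH : G ⊆ H := (Set.union_subset_iff.1 hFGH).2
  set w : Fin n → ℝ := (2⁻¹ : ℝ) • vF + (2⁻¹ : ℝ) • vG with hw
  have hwP : w ∈ P := hPconv (hFP hvFF) (hGP hvGG) (by norm_num) (by norm_num) (by norm_num)
  -- Key claim: from the relative interior point `w` of `H`, one can move past any `h ∈ H`.
  have key : ∀ h ∈ H, ∃ ε : ℝ, 0 < ε ∧ w + ε • (w - h) ∈ P := by
    intro h hh
    by_contra hcon
    push_neg at hcon
    set s : Finset (Fin n → ℝ) := V.image (fun v => v - w) with hs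
    set d : Fin n → ℝ := w - h with hd
    have hdK : d ∉ coneOf s := by
      rintro ⟨c, hc0, hcd⟩
      set S := ∑ u ∈ s, c u with hS
      have hS0 : 0 ≤ S := Finset.sum_nonneg hc0
      rcases eq_or_lt_of_le hS0 with hS' | hS'
      · have hall : ∀ u ∈ s, c u = 0 :=
          fun u hu => (Finset.sum_eq_zero_iff_of_nonneg hc0).1 hS'.symm u hu
        have hd0 : d = 0 := by
          rw [hcd]; exact Finset.sum_eq_zero fun u hu => by rw [hall u hu, zero_smul]
        exact hcon 1 one_pos (by rw [hd0]; simpa using hwP)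
      · set y := ∑ u ∈ s, (c u / S) • (u + w) with hy
        have hyP : y ∈ P := by
          rw [hP]
          apply Convex.sum_mem (convex_convexHull ℝ _)
          · intro u hu; exact div_nonneg (hc0 u hu) hS'.le
          · rw [← Finset.sum_div, ← hS]; exact div_self hS'.ne'
          · intro u hu
            obtain ⟨v, hv, rfl⟩ := Finset.mem_image.1 hu
            simpa using subset_convexHull ℝ (V : Set (Fin n → ℝ)) hv
        have hSy : S • y = d + S • w := by
          rw [hy, Finset.smul_sum]
          have hterm : ∀ u ∈ s, S • ((c u / S) • (u + w)) = c u • u + c u • w := by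
            intro u hu
            rw [smul_smul]
            have : S * (c u / S) = c u := by field_simp
            rw [this, smul_add]
          rw [Finset.sum_congr rfl hterm, Finset.sum_add_distrib, ← hcd, ← Finset.sum_smul, ← hS]
        have hd' : d = S • y - S • w := by rw [hSy]; abel
        have hfinal : w + (1 / (2 * S)) • d = (2⁻¹ : ℝ) • w + (2⁻¹ : ℝ) • y := by
          rw [hd', smul_sub, smul_smul, smul_smul]
          have hc2 : 1 / (2 * S) * S = (2⁻¹ : ℝ) := by field_simp
          rw [hc2]; module
        refine hcon (1 / (2 * S)) (div_pos one_pos (by linarith)) ?_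
        rw [hfinal]
        exact hPconv hwP hyP (by norm_num) (by norm_num) (by norm_num)
    obtain ⟨f, u0, hfK, hfd⟩ :=
      geometric_hahn_banach_closed_point (coneOf_convex s) (isClosed_coneOf s) hdK
    have hu0 : 0 < u0 := by simpa using hfK 0 (coneOf_zero s)
    have hfK0 : ∀ a ∈ coneOf s, f a ≤ 0 := by
      intro a ha
      by_contra hfa
      push_neg at hfa
      have hmem := hfK _ (coneOf_smul (le_of_lt (div_pos hu0 hfa)) ha)
      rw [map_smul, smul_eq_mul, div_mul_cancel₀ _ hfa.ne'] at hmem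
      exact lt_irrefl u0 hmem
    have hfP : ∀ p ∈ P, f p ≤ f w := by
      intro p hp
      rw [hP] at hp
      refine convexHull_min (fun v hv => ?_) (convex_halfSpace_le (LinearMap.isLinear _) (f w)) hp
      have := hfK0 _ (coneOf_single (Finset.mem_image_of_mem (fun v => v - w) hv))
      rw [map_sub] at this
      show f v ≤ f w
      linarith
    set H' : Set (Fin n → ℝ) := {x ∈ P | ∀ y ∈ P, f y ≤ f x} with hH'
    have hH'exp : IsExposed ℝ P H' := fun _ => ⟨f, hH'⟩
    have hwH' : w ∈ H' := ⟨hwP, fun y hy => hfP y hy⟩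
    have hfvFw : f vF = f w ∧ f vG = f w := by
      have h1 : f vF ≤ f w := hfP vF (hFP hvFF)
      have h2 : f vG ≤ f w := hfP vG (hGP hvGG)
      have h3 : f w = 2⁻¹ * f vF + 2⁻¹ * f vG := by
        rw [hw, map_add, map_smul, map_smul]; simp
      constructor <;> linarith
    have hmax_face : ∀ (F₀ : Set (Fin n → ℝ)) (v₀ : Fin n → ℝ), F₀ ⊆ P →
        v₀ ∈ intrinsicInterior ℝ F₀ → f v₀ = f w → F₀ ⊆ H' := by
      intro F₀ v₀ hF₀P hv₀ hfv₀ p hp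
      obtain ⟨t, ht, hq⟩ := relint_extend hv₀ hp
      have hfq : f (v₀ + t • (v₀ - p)) ≤ f w := hfP _ (hF₀P hq)
      have hfp : f p ≤ f w := hfP p (hF₀P hp)
      have hexp : f (v₀ + t • (v₀ - p)) = f v₀ + t * (f v₀ - f p) := by
        rw [map_add, map_smul, map_sub]; simp
      rw [hexp, hfv₀] at hfq
      have hfpw : f p = f w := by nlinarith
      exact ⟨hF₀P hp, fun y hy => (hfP y hy).trans hfpw.ge⟩
    have hHH' : H ⊆ H' :=
      hHmin H' ⟨w, hwH'⟩ hH'exp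
        (Set.union_subset (hmax_face F vF hFP hvFmem hfvFw.1) (hmax_face G vG hGP hvGmem hfvFw.2))
    obtain ⟨-, hmax⟩ := hHH' hh
    have h1 : f w ≤ f h := hmax w hwP
    have h2 : 0 < f d := lt_trans hu0 hfd
    rw [hd, map_sub] at h2
    linarith
  -- the right-hand side set of the first statement
  set R : Set (Fin n → ℝ) := {x | ∃ t ∈ tangentCone P G, ∃ r : ℝ, x = t + r • (vF - vG)}
    with hR
  have hR0 : (0 : Fin n → ℝ) ∈ R := ⟨0, tc_zero, 0, by simp⟩
  have hRadd : ∀ x y : Fin n → ℝ, x ∈ R → y ∈ R → x + y ∈ R := by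
    rintro x y ⟨t1, ht1, r1, rfl⟩ ⟨t2, ht2, r2, rfl⟩
    exact ⟨t1 + t2, tc_add ht1 ht2, r1 + r2, by module⟩
  have hRsmul : ∀ a : ℝ, 0 ≤ a → ∀ x ∈ R, a • x ∈ R := by
    rintro a ha x ⟨t, ht, r, rfl⟩
    exact ⟨a • t, tc_smul ha ht, a * r, by module⟩
  have hsubR : ∀ p ∈ P, ∀ h ∈ H, p - h ∈ R := by
    intro p hp h hh
    obtain ⟨ε, hε, hq⟩ := key h hh
    have hmem : ε • (p - vG) + ((w + ε • (w - h)) - vG) ∈ tangentCone P G :=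
      tc_add (tc_smul hε.le (tc_sub hp hvGG)) (tc_sub hq hvGG)
    have hid : ε • (p - h) =
        (ε • (p - vG) + ((w + ε • (w - h)) - vG)) + (-(1 + ε) / 2) • (vF - vG) := by
      rw [hw]; match_scalars <;> ring
    have hεR : ε • (p - h) ∈ R := ⟨_, hmem, _, hid⟩
    have h2 : p - h = ε⁻¹ • (ε • (p - h)) := by
      rw [smul_smul, inv_mul_cancel₀ hε.ne', one_smul]
    rw [h2]
    exact hRsmul _ (inv_nonneg.2 hε.le) _ hεR
  have part1 : tangentCone P H = R := by
    apply Set.Subset.antisymm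
    · rintro x ⟨k, c, p, q, hc, hpP, hqH, rfl⟩
      exact Finset.sum_induction _ (· ∈ R) hRadd hR0
        (fun i _ => hRsmul _ (hc i) _ (hsubR _ (hpP i) _ (hqH i)))
    · rintro x ⟨t, ht, r, rfl⟩
      rcases le_or_gt 0 r with hr | hr
      · exact tc_add (tc_mono hGH ht) (tc_single hr (hFP hvFF) (hGH hvGG))
      · have hflip : r • (vF - vG) = (-r) • (vG - vF) := by module
        rw [hflip]
        exact tc_add (tc_mono hGH ht) (tc_single (neg_nonneg.2 hr.le) (hGP hvGG) (hFH hvFF))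
  refine ⟨part1, ?_⟩
  ext x
  constructor
  · rintro ⟨hxT, hxL⟩
    rw [part1] at hxT
    obtain ⟨t, ht, r, rfl⟩ := hxT
    set m : ℤ := ⌊r⌋ with hm
    refine ⟨t + (r - (m : ℝ)) • (vF - vG), ⟨?_, ?_⟩, m, by module⟩
    · exact tc_add ht (tc_smul (sub_nonneg.2 (Int.floor_le r)) (tc_sub (hFP hvFF) hvGG))
    · intro i
      obtain ⟨a, ha⟩ := hxL i
      obtain ⟨bF, hbF⟩ := hvF i
      obtain ⟨bG, hbG⟩ := hvG i
      refine ⟨a - m * (bF - bG), ?_⟩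
      have h1 : (t + (r - (m : ℝ)) • (vF - vG)) i =
          (t + r • (vF - vG)) i - (m : ℝ) * (vF i - vG i) := by
        simp only [Pi.add_apply, Pi.smul_apply, Pi.sub_apply, smul_eq_mul]
        ring
      rw [h1, ha, hbF, hbG]
      push_cast
      ring
  · rintro ⟨s0, ⟨hsT, hsL⟩, m, rfl⟩
    constructor
    · rw [part1]; exact ⟨s0, hsT, (m : ℝ), rfl⟩
    · intro i
      obtain ⟨a, ha⟩ := hsL i
      obtain ⟨bF, hbF⟩ := hvF i
      obtain ⟨bG, hbG⟩ := hvG i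
      refine ⟨a + m * (bF - bG), ?_⟩
      have h1 : (s0 + (m : ℝ) • (vF - vG)) i = s0 i + (m : ℝ) * (vF i - vG i) := by
        simp only [Pi.add_apply, Pi.smul_apply, Pi.sub_apply, smul_eq_mul]
      rw [h1, ha, hbF, hbG]
      push_cast
      ring
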